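/- Let φ be a set of UTVPI constraints whose constraint graph G_φ contains no negative weight cycle (i.e., φ is satisfiable in ℚ), and define ρ(u) = ⌊wSP(u,−u)/2⌋. Then φ is unsatisfiable in ℤ if and only if there exists a vertex v of G_φ with ρ(v) + ρ(−v) < 0. -/

import Mathlib

namespace UTVPIPaper

/-- A linear integer constraint `f ≤ bound`, where `f` is a finitely supported
integer linear form over the variables `X`. -/
structure UC (X : Type*) where
  f : X →₀ ℤ
  bound : ℤ

variable {X : Type*}

/-- `c` is a UTVPI constraint, i.e. of the form `a·x + b·y ≤ d` with `a, b ∈ {-1, 0, 1}`. -/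
def UC.IsUTVPI (c : UC X) : Prop :=
  ∃ (a b : ℤ) (x y : X), (a = -1 ∨ a = 0 ∨ a = 1) ∧ (b = -1 ∨ b = 0 ∨ b = 1) ∧
    c.f = Finsupp.single x a + Finsupp.single y b

/-- The constraint `c` holds under the integer assignment `v`. -/
def UC.holds (v : X → ℤ) (c : UC X) : Prop :=
  (c.f.sum fun x a => a * v x) ≤ c.bound

/-- The assignment `v` satisfies all constraints of `φ`. -/
def Sat (v : X → ℤ) (φ : Set (UC X)) : Prop := ∀ c ∈ φ, c.holds v

/-- `φ` is satisfiable in ℤ. -/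
def SatZ (φ : Set (UC X)) : Prop := ∃ v : X → ℤ, Sat v φ

/-- The constraint `c` holds under the rational assignment `v`. -/
def UC.holdsQ (v : X → ℚ) (c : UC X) : Prop :=
  (c.f.sum fun x a => (a : ℚ) * v x) ≤ (c.bound : ℚ)

/-- `φ` is satisfiable in ℚ. -/
def SatQ (φ : Set (UC X)) : Prop := ∃ v : X → ℚ, ∀ c ∈ φ, c.holdsQ v

/-- The transitive closure `TC(φ)`: the smallest set containing `φ` closed under
the rule: `a·x - c·y ≤ d₁` and `c·y + b·z ≤ d₂` imply `a·x + b·z ≤ d₁ + d₂`,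
for `a, b ∈ {-1,0,1}` and `c ∈ {-1,1}`. -/
inductive TC (φ : Set (UC X)) : UC X → Prop
  | base {c : UC X} : c ∈ φ → TC φ c
  | trans {a b c : ℤ} {x y z : X} {d₁ d₂ : ℤ} :
      (a = -1 ∨ a = 0 ∨ a = 1) → (b = -1 ∨ b = 0 ∨ b = 1) → (c = -1 ∨ c = 1) →
      TC φ ⟨Finsupp.single x a - Finsupp.single y c, d₁⟩ →
      TC φ ⟨Finsupp.single y c + Finsupp.single z b, d₂⟩ →
      TC φ ⟨Finsupp.single x a + Finsupp.single z b, d₁ + d₂⟩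

/-- The tightened closure `TI(φ)`: the smallest set containing `φ` closed under
the rule: `a·x + a·x ≤ d` implies `a·x ≤ ⌊d/2⌋`, for `a ∈ {-1,1}`. -/
inductive TI (φ : Set (UC X)) : UC X → Prop
  | base {c : UC X} : c ∈ φ → TI φ c
  | tighten {a : ℤ} {x : X} {d : ℤ} :
      (a = -1 ∨ a = 1) →
      TI φ ⟨Finsupp.single x a + Finsupp.single x a, d⟩ →
      TI φ ⟨Finsupp.single x a, Int.fdiv d 2⟩

/-- The tightened transitive closure `TTC(φ)`: the smallest set containing `φ`
closed under both the transitivity and the tightening rules. -/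
inductive TTC (φ : Set (UC X)) : UC X → Prop
  | base {c : UC X} : c ∈ φ → TTC φ c
  | trans {a b c : ℤ} {x y z : X} {d₁ d₂ : ℤ} :
      (a = -1 ∨ a = 0 ∨ a = 1) → (b = -1 ∨ b = 0 ∨ b = 1) → (c = -1 ∨ c = 1) →
      TTC φ ⟨Finsupp.single x a - Finsupp.single y c, d₁⟩ →
      TTC φ ⟨Finsupp.single y c + Finsupp.single z b, d₂⟩ →
      TTC φ ⟨Finsupp.single x a + Finsupp.single z b, d₁ + d₂⟩
  | tighten {a : ℤ} {x : X} {d : ℤ} :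
      (a = -1 ∨ a = 1) →
      TTC φ ⟨Finsupp.single x a + Finsupp.single x a, d⟩ →
      TTC φ ⟨Finsupp.single x a, Int.fdiv d 2⟩

/-- Vertices of the constraint graph: `(true, x)` is `x⁺` and `(false, x)` is `x⁻`. -/
abbrev Vtx (X : Type*) := Bool × X

/-- The counterpart `-u` of a vertex `u`. -/
def vneg (u : Vtx X) : Vtx X := (!u.1, u.2)

/-- The set of edges `E(c)` associated with a UTVPI constraint `c`
(the transformation table):
`x - y ≤ d` gives `(y⁺, x⁺, d)` and `(x⁻, y⁻, d)`;
`x + y ≤ d` gives `(y⁻, x⁺, d)` and `(x⁻, y⁺, d)`;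
`-x - y ≤ d` gives `(y⁺, x⁻, d)` and `(x⁺, y⁻, d)`;
`x ≤ d` gives `(x⁻, x⁺, 2d)`; `-x ≤ d` gives `(x⁺, x⁻, 2d)`. -/
def cedges (c : UC X) : Set (Vtx X × Vtx X × ℤ) :=
  { e | ∃ (x y : X) (d : ℤ),
      (c = ⟨Finsupp.single x 1 - Finsupp.single y 1, d⟩ ∧
        (e = ((true, y), (true, x), d) ∨ e = ((false, x), (false, y), d))) ∨
      (c = ⟨Finsupp.single x 1 + Finsupp.single y 1, d⟩ ∧
        (e = ((false, y), (true, x), d) ∨ e = ((false, x), (true, y), d))) ∨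
      (c = ⟨-Finsupp.single x 1 - Finsupp.single y 1, d⟩ ∧
        (e = ((true, y), (false, x), d) ∨ e = ((true, x), (false, y), d))) ∨
      (c = ⟨Finsupp.single x 1, d⟩ ∧ e = ((false, x), (true, x), 2 * d)) ∨
      (c = ⟨-Finsupp.single x 1, d⟩ ∧ e = ((true, x), (false, x), 2 * d)) }

/-- The constraint graph `G_φ` of a set `φ` of UTVPI constraints. -/
def Gr (φ : Set (UC X)) : Set (Vtx X × Vtx X × ℤ) := { e | ∃ c ∈ φ, e ∈ cedges c }

/-- `IsPath E u p v`: `p` is a path (a sequence of consecutive weighted edges,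
each belonging to the edge set `E`) from vertex `u` to vertex `v`. -/
inductive IsPath {V : Type*} (E : Set (V × V × ℤ)) : V → List (V × V × ℤ) → V → Prop
  | nil (v : V) : IsPath E v [] v
  | cons {u v w : V} {d : ℤ} {p : List (V × V × ℤ)} :
      (u, v, d) ∈ E → IsPath E v p w → IsPath E u ((u, v, d) :: p) w

/-- The weight of a path: the sum of the weights of its edges. -/
def pweight {V : Type*} (p : List (V × V × ℤ)) : ℤ := (p.map fun e => e.2.2).sum

/-- The graph `E` has no negative weight cycle. -/
def NoNegCycle {V : Type*} (E : Set (V × V × ℤ)) : Prop :=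
  ∀ (v : V) (p : List (V × V × ℤ)), IsPath E v p v → 0 ≤ pweight p

/-- `wSP E u v` is the minimum weight of a path from `u` to `v` in `E`
(`⊤` if no path exists). -/
noncomputable def wSP {V : Type*} (E : Set (V × V × ℤ)) (u v : V) : WithTop ℤ :=
  sInf {w : WithTop ℤ | ∃ p, IsPath E u p v ∧ (pweight p : WithTop ℤ) = w}

/-- The bounds function `ρ(u) = ⌊wSP(u, -u) / 2⌋` (`⊤` if there is no path from `u` to `-u`). -/
noncomputable def rho (φ : Set (UC X)) (u : Vtx X) : WithTop ℤ :=
  (wSP (Gr φ) u (vneg u)).map fun w => Int.fdiv w 2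


/- ============ Part A : path basics ============ -/

section Paths
variable {V : Type*} {E : Set (V × V × ℤ)}

lemma pweight_nil : pweight ([] : List (V × V × ℤ)) = 0 := rfl

lemma pweight_cons (e : V × V × ℤ) (p : List (V × V × ℤ)) :
    pweight (e :: p) = e.2.2 + pweight p := by simp [pweight]

lemma pweight_append (p q : List (V × V × ℤ)) :
    pweight (p ++ q) = pweight p + pweight q := by simp [pweight]

lemma IsPath.append {u v w : V} {p q : List (V × V × ℤ)}
    (h1 : IsPath E u p v) (h2 : IsPath E v q w) : IsPath E u (p ++ q) w := by
  induction h1 with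
  | nil => exact h2
  | cons he _ ih => exact IsPath.cons he (ih h2)

lemma IsPath.split {u w : V} {p q : List (V × V × ℤ)}
    (h : IsPath E u (p ++ q) w) : ∃ v, IsPath E u p v ∧ IsPath E v q w := by
  induction p generalizing u with
  | nil => exact ⟨u, IsPath.nil u, h⟩
  | cons e p ih =>
    cases h with
    | cons he ht =>
      obtain ⟨v, h1, h2⟩ := ih ht
      exact ⟨v, IsPath.cons he h1, h2⟩

lemma IsPath.cons_elim {u w : V} {e : V × V × ℤ} {p : List (V × V × ℤ)}
    (h : IsPath E u (e :: p) w) : u = e.1 ∧ e ∈ E ∧ IsPath E e.2.1 p w := by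
  cases h with
  | cons he ht => exact ⟨rfl, he, ht⟩

lemma IsPath.edge_mem {u w : V} {p : List (V × V × ℤ)}
    (h : IsPath E u p w) : ∀ e ∈ p, e ∈ E := by
  induction h with
  | nil => simp
  | cons he _ ih =>
    intro e hmem
    rcases List.mem_cons.1 hmem with h | h
    · subst h; exact he
    · exact ih e h

lemma IsPath.mono {E' : Set (V × V × ℤ)} (hEE : E ⊆ E') {u w : V} {p : List (V × V × ℤ)}
    (h : IsPath E u p w) : IsPath E' u p w := by
  induction h with
  | nil => exact IsPath.nil _
  | cons he _ ih => exact IsPath.cons (hEE he) ih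

/-- remove a self-loop edge from a path -/
lemma IsPath.remove_loop {u v : V} {p₁ p₂ : List (V × V × ℤ)} {e : V × V × ℤ}
    (h : IsPath E u (p₁ ++ e :: p₂) v) (hl : e.1 = e.2.1) :
    IsPath E u (p₁ ++ p₂) v := by
  obtain ⟨m, h1, h2⟩ := h.split
  obtain ⟨hm, _, h3⟩ := h2.cons_elim
  refine h1.append ?_
  rwa [hm, hl]

/-- cut a repeated edge cycle -/
lemma IsPath.cut_cycle {u v : V} {p₁ p₂ p₃ : List (V × V × ℤ)} {e : V × V × ℤ}
    (h : IsPath E u (p₁ ++ (e :: (p₂ ++ e :: p₃))) v) :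
    IsPath E u (p₁ ++ e :: p₃) v ∧ IsPath E e.1 (e :: p₂) e.1 := by
  obtain ⟨m₁, h1, h2⟩ := h.split
  obtain ⟨hm₁, he, h3⟩ := h2.cons_elim
  obtain ⟨m₂, h4, h5⟩ := h3.split
  obtain ⟨hm₂, he2, h6⟩ := h5.cons_elim
  constructor
  · refine h1.append ?_
    rw [hm₁]
    exact IsPath.cons he h6
  · have : IsPath E e.2.1 p₂ e.1 := by rwa [hm₂] at h4
    exact IsPath.cons he this

lemma not_nodup_decomp {α : Type*} {l : List α} (h : ¬ l.Nodup) :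
    ∃ a l₁ l₂ l₃, l = l₁ ++ a :: l₂ ++ a :: l₃ := by
  induction l with
  | nil => simp at h
  | cons b t ih =>
    by_cases hb : b ∈ t
    · obtain ⟨s, r, rfl⟩ := List.append_of_mem hb
      exact ⟨b, [], s, r, rfl⟩
    · have ht : ¬ t.Nodup := by
        intro hn; exact h (List.nodup_cons.2 ⟨hb, hn⟩)
      obtain ⟨a, l₁, l₂, l₃, rfl⟩ := ih ht
      exact ⟨a, b :: l₁, l₂, l₃, rfl⟩

end Paths
/- ============ Part B : uniform lower bound on path weights, wSP facts ============ -/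

section Bound
variable {V : Type*} {E : Set (V × V × ℤ)}

lemma pweight_lb [DecidableEq (V × V × ℤ)] (F : Finset (V × V × ℤ))
    (hF : ∀ e ∈ E, e.1 ≠ e.2.1 → e ∈ F)
    (hsl : ∀ e ∈ E, e.1 = e.2.1 → 0 ≤ e.2.2)
    (hnc : NoNegCycle E) :
    ∀ {u v : V} {p : List (V × V × ℤ)}, IsPath E u p v →
      (∑ e ∈ F, min e.2.2 0) ≤ pweight p := by
  suffices H : ∀ (n : ℕ) {u v : V} (p : List (V × V × ℤ)), p.length ≤ n → IsPath E u p v →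
      (∑ e ∈ F, min e.2.2 0) ≤ pweight p by
    intro u v p hp; exact H p.length p le_rfl hp
  intro n
  induction n with
  | zero =>
    intro u v p hl hp
    rw [List.length_eq_zero_iff.1 (Nat.le_zero.1 hl)]
    rw [pweight_nil]
    exact Finset.sum_nonpos (fun e _ => min_le_right _ _)
  | succ n ih =>
    intro u v p hl hp
    by_cases hloop : ∃ e ∈ p, e.1 = e.2.1
    · obtain ⟨e, hep, hel⟩ := hloop
      obtain ⟨p₁, p₂, rfl⟩ := List.append_of_mem hep
      have h2 := hp.remove_loop hel
      have hle : (∑ e ∈ F, min e.2.2 0) ≤ pweight (p₁ ++ p₂) := by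
        refine ih _ ?_ h2
        have := hl
        simp only [List.length_append, List.length_cons] at this ⊢
        omega
      have hd : 0 ≤ e.2.2 := hsl e (hp.edge_mem e hep) hel
      calc (∑ e ∈ F, min e.2.2 0) ≤ pweight (p₁ ++ p₂) := hle
        _ ≤ pweight (p₁ ++ e :: p₂) := by
            rw [pweight_append, pweight_append, pweight_cons]; omega
    · by_cases hnd : p.Nodup
      · -- all edges distinct, non-loops, hence in F
        classical
        have hsub : p.toFinset ⊆ F := by
          intro e he
          rw [List.mem_toFinset] at he
          refine hF e (hp.edge_mem e he) ?_
          intro hlp; exact hloop ⟨e, he, hlp⟩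
        have hw : pweight p = ∑ e ∈ p.toFinset, e.2.2 := by
          rw [List.sum_toFinset _ hnd]; rfl
        calc (∑ e ∈ F, min e.2.2 0)
            ≤ ∑ e ∈ p.toFinset, min e.2.2 0 := by
              have := Finset.sum_le_sum_of_subset_of_nonneg (f := fun e : V × V × ℤ => -(min e.2.2 0)) hsub
                (fun e _ _ => by simp [min_le_right e.2.2 0])
              simp only [Finset.sum_neg_distrib] at this
              omega
          _ ≤ ∑ e ∈ p.toFinset, e.2.2 := Finset.sum_le_sum (fun e _ => min_le_left _ _)
          _ = pweight p := hw.symm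
      · obtain ⟨e, p₁, p₂, p₃, hpe⟩ := not_nodup_decomp hnd
        have hpe' : p = p₁ ++ (e :: (p₂ ++ e :: p₃)) := by simpa using hpe
        subst hpe'
        obtain ⟨hred, hcyc⟩ := hp.cut_cycle
        have h0 : 0 ≤ pweight (e :: p₂) := hnc _ _ hcyc
        have hle : (∑ e ∈ F, min e.2.2 0) ≤ pweight (p₁ ++ e :: p₃) := by
          refine ih _ ?_ hred
          have := hl
          simp only [List.length_append, List.length_cons] at this ⊢
          omega
        calc (∑ e ∈ F, min e.2.2 0) ≤ pweight (p₁ ++ e :: p₃) := hle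
          _ ≤ pweight (p₁ ++ (e :: (p₂ ++ e :: p₃))) := by
              simp only [pweight_append, pweight_cons] at h0 ⊢
              omega

end Bound
/- ============ Part C : wSP characterization ============ -/

section WSP
variable {V : Type*} {E : Set (V × V × ℤ)}

lemma wSP_eq_top_of_no_path {u v : V} (h : ∀ p, ¬ IsPath E u p v) :
    wSP E u v = ⊤ := by
  have : {w : WithTop ℤ | ∃ p, IsPath E u p v ∧ (pweight p : WithTop ℤ) = w} = ∅ := by
    ext w; simp only [Set.mem_setOf_eq, Set.mem_empty_iff_false, iff_false]
    rintro ⟨p, hp, -⟩; exact h p hp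
  rw [wSP, this, WithTop.sInf_empty]

/-- if there is a path and path weights are bounded below, `wSP` is attained. -/
lemma wSP_spec {u v : V} (B : ℤ) (hB : ∀ p, IsPath E u p v → B ≤ pweight p)
    {p₀ : List (V × V × ℤ)} (h₀ : IsPath E u p₀ v) :
    ∃ w : ℤ, wSP E u v = (w : WithTop ℤ) ∧ (∃ p, IsPath E u p v ∧ pweight p = w) ∧
      (∀ q, IsPath E u q v → w ≤ pweight q) := by
  set S : Set (WithTop ℤ) := {w : WithTop ℤ | ∃ p, IsPath E u p v ∧ (pweight p : WithTop ℤ) = w}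
    with hS
  have hpre : (fun (a : ℤ) => (a : WithTop ℤ)) ⁻¹' S = {w : ℤ | ∃ p, IsPath E u p v ∧ pweight p = w} := by
    ext w
    simp only [Set.mem_preimage, hS, Set.mem_setOf_eq, WithTop.coe_inj]
  have hns : ¬ S ⊆ {⊤} := by
    intro hsub
    have : (pweight p₀ : WithTop ℤ) ∈ S := ⟨p₀, h₀, rfl⟩
    have := hsub this
    simp at this
  have hbdd : BddBelow S := by
    refine ⟨(B : WithTop ℤ), ?_⟩
    rintro w ⟨p, hp, rfl⟩
    exact_mod_cast hB p hp
  have heq : wSP E u v = ((sInf ((fun (a : ℤ) => (a : WithTop ℤ)) ⁻¹' S) : ℤ) : WithTop ℤ) :=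
    WithTop.sInf_eq hns hbdd
  rw [hpre] at heq
  set S₀ : Set ℤ := {w : ℤ | ∃ p, IsPath E u p v ∧ pweight p = w} with hS₀
  have hne : S₀.Nonempty := ⟨pweight p₀, p₀, h₀, rfl⟩
  have hbdd₀ : BddBelow S₀ := ⟨B, by rintro w ⟨p, hp, rfl⟩; exact hB p hp⟩
  refine ⟨sInf S₀, heq, Int.csInf_mem hne hbdd₀, ?_⟩
  intro q hq
  exact csInf_le hbdd₀ ⟨q, hq, rfl⟩

lemma wSP_ne_top_elim {u v : V} {w : ℤ} (h : wSP E u v = (w : WithTop ℤ)) :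
    ∃ p, IsPath E u p v := by
  by_contra hno
  push_neg at hno
  rw [wSP_eq_top_of_no_path hno] at h
  exact (WithTop.top_ne_coe h).elim

end WSP
/- ============ Part D : vneg / mirror / Finsupp evaluation ============ -/

section Mirror
variable {X : Type*}

@[simp] lemma vneg_vneg (u : Vtx X) : vneg (vneg u) = u := by
  cases u with | mk b x => simp [vneg]

lemma vneg_ne (u : Vtx X) : vneg u ≠ u := by
  cases u with | mk b x => simp [vneg, Prod.ext_iff]

lemma vneg_inj {u v : Vtx X} (h : vneg u = vneg v) : u = v := by
  have := congrArg vneg h; simpa using this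

/-- mirror of an edge -/
def mirrorE (e : Vtx X × Vtx X × ℤ) : Vtx X × Vtx X × ℤ := (vneg e.2.1, vneg e.1, e.2.2)

@[simp] lemma mirrorE_w (e : Vtx X × Vtx X × ℤ) : (mirrorE e).2.2 = e.2.2 := rfl

def MirrorClosed (E : Set (Vtx X × Vtx X × ℤ)) : Prop := ∀ e ∈ E, mirrorE e ∈ E

lemma cedges_mirror {c : UC X} {e} (he : e ∈ cedges c) : mirrorE e ∈ cedges c := by
  obtain ⟨x, y, d, hc⟩ := he
  refine ⟨x, y, d, ?_⟩
  rcases hc with ⟨h, he⟩ | ⟨h, he⟩ | ⟨h, he⟩ | ⟨h, he⟩ | ⟨h, he⟩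
  · exact Or.inl ⟨h, by rcases he with rfl | rfl <;> simp [mirrorE, vneg]⟩
  · exact Or.inr <| Or.inl ⟨h, by rcases he with rfl | rfl <;> simp [mirrorE, vneg]⟩
  · exact Or.inr <| Or.inr <| Or.inl ⟨h, by rcases he with rfl | rfl <;> simp [mirrorE, vneg]⟩
  · exact Or.inr <| Or.inr <| Or.inr <| Or.inl ⟨h, by subst he; simp [mirrorE, vneg]⟩
  · exact Or.inr <| Or.inr <| Or.inr <| Or.inr ⟨h, by subst he; simp [mirrorE, vneg]⟩

lemma Gr_mirror (φ : Set (UC X)) : MirrorClosed (Gr φ) := by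
  rintro e ⟨c, hc, he⟩
  exact ⟨c, hc, cedges_mirror he⟩

/-- mirror of a path -/
def mirrorP (p : List (Vtx X × Vtx X × ℤ)) : List (Vtx X × Vtx X × ℤ) :=
  (p.map mirrorE).reverse

@[simp] lemma pweight_mirrorP (p : List (Vtx X × Vtx X × ℤ)) :
    pweight (mirrorP p) = pweight p := by
  unfold mirrorP pweight
  rw [List.map_reverse, List.sum_reverse, List.map_map]
  congr 1

lemma IsPath.mirror {E : Set (Vtx X × Vtx X × ℤ)} (hE : MirrorClosed E)
    {u v : Vtx X} {p} (h : IsPath E u p v) :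
    IsPath E (vneg v) (mirrorP p) (vneg u) := by
  induction h with
  | nil => exact IsPath.nil _
  | @cons a b w d q he hq ih =>
    have hm : (vneg b, vneg a, d) ∈ E := hE _ he
    have : IsPath E (vneg b) [(vneg b, vneg a, d)] (vneg a) := IsPath.cons hm (IsPath.nil _)
    have := ih.append this
    simpa [mirrorP, mirrorE] using this

end Mirror

section Eval
variable {X : Type*}

lemma eval_add (m : X → ℤ) (f g : X →₀ ℤ) :
    ((f + g).sum fun z a => a * m z) = (f.sum fun z a => a * m z) + (g.sum fun z a => a * m z) :=
  Finsupp.sum_add_index' (by simp) (by intros; ring)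

lemma eval_single (m : X → ℤ) (x : X) (a : ℤ) :
    ((Finsupp.single x a).sum fun z b => b * m z) = a * m x :=
  Finsupp.sum_single_index (by simp)

lemma eval_sub (m : X → ℤ) (f g : X →₀ ℤ) :
    ((f - g).sum fun z a => a * m z) = (f.sum fun z a => a * m z) - (g.sum fun z a => a * m z) :=
  Finsupp.sum_sub_index (by intros; ring)

lemma eval_neg (m : X → ℤ) (f : X →₀ ℤ) :
    ((-f).sum fun z a => a * m z) = -(f.sum fun z a => a * m z) := by
  have := eval_sub m 0 f
  simpa using this

end Eval
/- ============ Part E : easy direction ============ -/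

section Easy
variable {X : Type*}

/-- vertex valuation induced by a model -/
def mval (m : X → ℤ) (u : Vtx X) : ℤ := if u.1 then m u.2 else -(m u.2)

@[simp] lemma mval_vneg (m : X → ℤ) (u : Vtx X) : mval m (vneg u) = - mval m u := by
  cases u with | mk b x => cases b <;> simp [mval, vneg]

lemma mval_edge {φ : Set (UC X)} {m : X → ℤ} (hm : Sat m φ)
    {e : Vtx X × Vtx X × ℤ} (he : e ∈ Gr φ) :
    mval m e.2.1 ≤ mval m e.1 + e.2.2 := by
  obtain ⟨c, hcφ, x, y, d, hc⟩ := he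
  have hold := hm c hcφ
  rcases hc with ⟨rfl, he⟩ | ⟨rfl, he⟩ | ⟨rfl, he⟩ | ⟨rfl, he⟩ | ⟨rfl, he⟩ <;>
    rw [UC.holds] at hold <;>
    simp only [eval_sub, eval_add, eval_neg, eval_single] at hold
  · rcases he with rfl | rfl <;> simp [mval] <;> omega
  · rcases he with rfl | rfl <;> simp [mval] <;> omega
  · rcases he with rfl | rfl <;> simp [mval] <;> omega
  · subst he; simp [mval]; omega
  · subst he; simp [mval]; omega

lemma mval_path {φ : Set (UC X)} {m : X → ℤ} (hm : Sat m φ)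
    {u v : Vtx X} {p} (hp : IsPath (Gr φ) u p v) :
    mval m v ≤ mval m u + pweight p := by
  induction hp with
  | nil => simp [pweight_nil]
  | @cons a b w d q he hq ih =>
    have h1 := mval_edge hm he
    rw [pweight_cons]
    simp only at h1 ⊢
    omega

lemma unsatZ_of_rho_neg {φ : Set (UC X)}
    (h : ∃ v : Vtx X, rho φ v + rho φ (vneg v) < (0 : WithTop ℤ)) : ¬ SatZ φ := by
  rintro ⟨m, hm⟩
  obtain ⟨v, hv⟩ := h
  -- both rho's must be finite
  rcases htop1 : wSP (Gr φ) v (vneg v) with _ | w1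
  · have h1 : rho φ v = ⊤ := by rw [rho, htop1]; rfl
    rw [h1, top_add] at hv
    exact not_top_lt hv
  rcases htop2 : wSP (Gr φ) (vneg v) (vneg (vneg v)) with _ | w2
  · have h2 : rho φ (vneg v) = ⊤ := by rw [rho, htop2]; rfl
    rw [h2, add_top] at hv
    exact not_top_lt hv
  have h1 : rho φ v = ((Int.fdiv w1 2 : ℤ) : WithTop ℤ) := by rw [rho, htop1]; rfl
  have h2 : rho φ (vneg v) = ((Int.fdiv w2 2 : ℤ) : WithTop ℤ) := by rw [rho, htop2]; rfl
  rw [h1, h2] at hv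
  have hsum : Int.fdiv w1 2 + Int.fdiv w2 2 < 0 := by exact_mod_cast hv
  -- lower bounds from the model
  have hB1 : ∀ p, IsPath (Gr φ) v p (vneg v) → mval m (vneg v) - mval m v ≤ pweight p := by
    intro p hp; have := mval_path hm hp; omega
  have hB2 : ∀ p, IsPath (Gr φ) (vneg v) p (vneg (vneg v)) →
      mval m (vneg (vneg v)) - mval m (vneg v) ≤ pweight p := by
    intro p hp; have := mval_path hm hp; omega
  obtain ⟨p1, hp1⟩ := wSP_ne_top_elim htop1
  obtain ⟨p2, hp2⟩ := wSP_ne_top_elim htop2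
  obtain ⟨w1', he1, ⟨q1, hq1, hwq1⟩, -⟩ := wSP_spec _ hB1 hp1
  obtain ⟨w2', he2, ⟨q2, hq2, hwq2⟩, -⟩ := wSP_spec _ hB2 hp2
  rw [htop1] at he1; rw [htop2] at he2
  have hw1 : w1 = w1' := by
    have : ((w1 : ℤ) : WithTop ℤ) = (w1' : WithTop ℤ) := he1
    exact_mod_cast this
  have hw2 : w2 = w2' := by
    have : ((w2 : ℤ) : WithTop ℤ) = (w2' : WithTop ℤ) := he2
    exact_mod_cast this
  have hb1 : mval m (vneg v) - mval m v ≤ w1 := by rw [hw1, ← hwq1]; exact hB1 q1 hq1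
  have hb2 : mval m (vneg (vneg v)) - mval m (vneg v) ≤ w2 := by rw [hw2, ← hwq2]; exact hB2 q2 hq2
  simp only [mval_vneg, vneg_vneg] at hb1 hb2
  rw [Int.fdiv_eq_ediv_of_nonneg _ (by norm_num), Int.fdiv_eq_ediv_of_nonneg _ (by norm_num)] at hsum
  omega

end Easy
/- ============ Part F : finiteness of the relevant edges, tightened graph ============ -/

section Tight
variable {X : Type*}

/-- tightening edges -/
def Tset (φ : Set (UC X)) : Set (Vtx X × Vtx X × ℤ) :=
  {e | ∃ (u : Vtx X) (r : ℤ), rho φ u = (r : WithTop ℤ) ∧ e = (u, vneg u, 2*r)}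

/-- the tightened graph -/
def Gt (φ : Set (UC X)) : Set (Vtx X × Vtx X × ℤ) := Gr φ ∪ Tset φ

lemma Gt_mirror (φ : Set (UC X)) : MirrorClosed (Gt φ) := by
  rintro e (he | ⟨u, r, hr, rfl⟩)
  · exact Or.inl (Gr_mirror φ _ he)
  · refine Or.inr ⟨u, r, hr, ?_⟩
    simp [mirrorE]

lemma grNL_fin {φ : Set (UC X)} (hfin : φ.Finite) :
    {e ∈ Gr φ | e.1 ≠ e.2.1}.Finite := by
  have h1 : {e ∈ Gr φ | e.1 ≠ e.2.1} ⊆ ⋃ c ∈ φ, {e ∈ cedges c | e.1 ≠ e.2.1} := by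
    rintro e ⟨⟨c, hc, he⟩, hnl⟩
    exact Set.mem_biUnion hc ⟨he, hnl⟩
  refine Set.Finite.subset (Set.Finite.biUnion hfin ?_) h1
  intro c _
  have h2 : {e ∈ cedges c | e.1 ≠ e.2.1} ⊆
      ((Set.univ : Set Bool) ×ˢ (↑c.f.support : Set X)) ×ˢ
        (((Set.univ : Set Bool) ×ˢ (↑c.f.support : Set X)) ×ˢ
          ({c.bound, 2*c.bound} : Set ℤ)) := by
    rintro e ⟨⟨x, y, d, hc⟩, hnl⟩
    rcases hc with ⟨hc, he⟩ | ⟨hc, he⟩ | ⟨hc, he⟩ | ⟨hc, he⟩ | ⟨hc, he⟩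
    · -- x - y ≤ d, nonloop forces x ≠ y
      have hd : d = c.bound := by rw [hc]
      have hxy : x ≠ y := by
        rintro rfl
        rcases he with rfl | rfl <;> exact hnl rfl
      have hfx : c.f x ≠ 0 := by
        rw [hc]; simp [Finsupp.single_apply, hxy, Ne.symm hxy]
      have hfy : c.f y ≠ 0 := by
        rw [hc]; simp [Finsupp.single_apply, hxy, Ne.symm hxy]
      rcases he with rfl | rfl <;>
        exact ⟨⟨trivial, by simpa using ‹c.f _ ≠ 0›⟩, ⟨trivial, by simpa using ‹c.f _ ≠ 0›⟩,
          by simp [hd]⟩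
    · have hd : d = c.bound := by rw [hc]
      have hfx : c.f x ≠ 0 := by
        rw [hc]; by_cases hxy : y = x <;>
          simp [Finsupp.single_apply, hxy]
      have hfy : c.f y ≠ 0 := by
        rw [hc]; by_cases hxy : x = y <;>
          simp [Finsupp.single_apply, hxy]
      rcases he with rfl | rfl <;>
        exact ⟨⟨trivial, by simpa using ‹c.f _ ≠ 0›⟩, ⟨trivial, by simpa using ‹c.f _ ≠ 0›⟩,
          by simp [hd]⟩
    · have hd : d = c.bound := by rw [hc]
      have hfx : c.f x ≠ 0 := by
        rw [hc]; by_cases hxy : y = x <;>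
          simp [Finsupp.single_apply, hxy]
      have hfy : c.f y ≠ 0 := by
        rw [hc]; by_cases hxy : x = y <;>
          simp [Finsupp.single_apply, hxy]
      rcases he with rfl | rfl <;>
        exact ⟨⟨trivial, by simpa using ‹c.f _ ≠ 0›⟩, ⟨trivial, by simpa using ‹c.f _ ≠ 0›⟩,
          by simp [hd]⟩
    · have hd : (2*d : ℤ) = 2*c.bound := by rw [hc]
      have hfx : c.f x ≠ 0 := by rw [hc]; simp
      subst he
      exact ⟨⟨trivial, by simpa using hfx⟩, ⟨trivial, by simpa using hfx⟩, by simp [hd]⟩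
    · have hd : (2*d : ℤ) = 2*c.bound := by rw [hc]
      have hfx : c.f x ≠ 0 := by rw [hc]; simp
      subst he
      exact ⟨⟨trivial, by simpa using hfx⟩, ⟨trivial, by simpa using hfx⟩, by simp [hd]⟩
  refine Set.Finite.subset ?_ h2
  refine Set.Finite.prod (Set.Finite.prod (Set.finite_univ) (c.f.support.finite_toSet)) ?_
  refine Set.Finite.prod (Set.Finite.prod (Set.finite_univ) (c.f.support.finite_toSet)) ?_
  exact (Set.finite_singleton _).insert _

lemma sl_nonneg {φ : Set (UC X)} (hnnc : NoNegCycle (Gr φ)) :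
    ∀ e ∈ Gr φ, e.1 = e.2.1 → 0 ≤ e.2.2 := by
  intro e he hl
  have hp : IsPath (Gr φ) e.1 [e] e.1 := by
    have : IsPath (Gr φ) e.2.1 [] e.1 := by rw [← hl]; exact IsPath.nil _
    exact IsPath.cons (by rwa [show (e.1, e.2.1, e.2.2) = e by rfl]) this
  have := hnnc _ _ hp
  simpa [pweight_cons, pweight_nil] using this

lemma path_first_nonloop {E : Set (Vtx X × Vtx X × ℤ)} {u v : Vtx X} {p}
    (hp : IsPath E u p v) (huv : u ≠ v) :
    ∃ e ∈ E, e.1 = u ∧ e.1 ≠ e.2.1 := by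
  induction hp with
  | nil => exact absurd rfl huv
  | @cons a b w d q he hq ih =>
    by_cases hab : a = b
    · subst hab
      obtain ⟨e, heE, he1, he2⟩ := ih huv
      exact ⟨e, heE, he1, he2⟩
    · exact ⟨(a, b, d), he, rfl, hab⟩

lemma tset_fin {φ : Set (UC X)} (hfin : φ.Finite) : (Tset φ).Finite := by
  have h1 : Tset φ ⊆ (fun (u : Vtx X) => (u, vneg u, 2 * ((rho φ u).untopD 0))) ''
      ((fun (e : Vtx X × Vtx X × ℤ) => e.1) '' {e ∈ Gr φ | e.1 ≠ e.2.1}) := by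
    rintro e ⟨u, r, hr, rfl⟩
    have hpath : ∃ p, IsPath (Gr φ) u p (vneg u) := by
      rcases htop : wSP (Gr φ) u (vneg u) with _ | w
      · rw [rho, htop] at hr; exact (WithTop.top_ne_coe hr).elim
      · exact wSP_ne_top_elim htop
    obtain ⟨p, hp⟩ := hpath
    obtain ⟨e, heE, he1, he2⟩ := path_first_nonloop hp (Ne.symm (vneg_ne u))
    refine ⟨u, ⟨e, ⟨heE, he2⟩, he1⟩, ?_⟩
    show (u, vneg u, 2 * WithTop.untopD 0 (rho φ u)) = (u, vneg u, 2 * r)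
    rw [hr, WithTop.untopD_coe]
  exact Set.Finite.subset (Set.Finite.image _ (Set.Finite.image _ (grNL_fin hfin))) h1

lemma gt_nonloop {φ : Set (UC X)} :
    ∀ e ∈ Gt φ, e.1 ≠ e.2.1 → e ∈ {e ∈ Gr φ | e.1 ≠ e.2.1} ∪ Tset φ := by
  rintro e (he | he) hnl
  · exact Or.inl ⟨he, hnl⟩
  · exact Or.inr he

lemma gt_sl_nonneg {φ : Set (UC X)} (hnnc : NoNegCycle (Gr φ)) :
    ∀ e ∈ Gt φ, e.1 = e.2.1 → 0 ≤ e.2.2 := by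
  rintro e (he | ⟨u, r, hr, rfl⟩) hl
  · exact sl_nonneg hnnc e he hl
  · exact absurd hl.symm (vneg_ne u)

end Tight
/- ============ Part G : rho plumbing, mirror trick, Lemma C, Claims E and A ============ -/

section Hard
variable {X : Type*} {φ : Set (UC X)}

/-- lower bound for paths in the plain constraint graph -/
lemma wlbG (hfin : φ.Finite) (hnnc : NoNegCycle (Gr φ)) :
    ∃ B : ℤ, ∀ (u v : Vtx X) (p : List (Vtx X × Vtx X × ℤ)), IsPath (Gr φ) u p v → B ≤ pweight p := by
  classical
  refine ⟨∑ e ∈ (grNL_fin hfin).toFinset, min e.2.2 0, fun u v p hp => ?_⟩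
  refine pweight_lb _ ?_ (sl_nonneg hnnc) hnnc hp
  intro e he hnl
  rw [Set.Finite.mem_toFinset]
  exact ⟨he, hnl⟩

/-- characterization of a finite `rho` -/
lemma rho_spec (hfin : φ.Finite) (hnnc : NoNegCycle (Gr φ)) {u : Vtx X} {r : ℤ}
    (hr : rho φ u = (r : WithTop ℤ)) :
    (∃ p, IsPath (Gr φ) u p (vneg u) ∧ pweight p ≤ 2*r + 1) ∧
      (∀ q, IsPath (Gr φ) u q (vneg u) → 2*r ≤ pweight q) := by
  rcases htop : wSP (Gr φ) u (vneg u) with _ | w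
  · rw [rho, htop] at hr; exact (WithTop.top_ne_coe hr).elim
  have hr' : r = Int.fdiv w 2 := by
    rw [rho, htop] at hr
    have : ((Int.fdiv w 2 : ℤ) : WithTop ℤ) = (r : WithTop ℤ) := hr
    exact_mod_cast this.symm
  obtain ⟨p₀, hp₀⟩ := wSP_ne_top_elim htop
  obtain ⟨B, hB⟩ := wlbG hfin hnnc
  obtain ⟨w', hw', ⟨p, hp, hwp⟩, hmin⟩ := wSP_spec B (hB u (vneg u)) hp₀
  rw [htop] at hw'
  have hww : w = w' := by
    have : ((w : ℤ) : WithTop ℤ) = (w' : WithTop ℤ) := hw'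
    exact_mod_cast this
  subst hww hr'
  have h2 := Int.fdiv_eq_ediv_of_nonneg w (by norm_num : (0:ℤ) ≤ 2)
  constructor
  · exact ⟨p, hp, by omega⟩
  · intro q hq
    have := hmin q hq
    omega

/-- if there is a path from `u` to `-u` then `rho u` is finite -/
lemma rho_finite_of_path (hfin : φ.Finite) (hnnc : NoNegCycle (Gr φ)) {u : Vtx X} {p}
    (hp : IsPath (Gr φ) u p (vneg u)) : ∃ r : ℤ, rho φ u = (r : WithTop ℤ) := by
  obtain ⟨B, hB⟩ := wlbG hfin hnnc
  obtain ⟨w, hw, -, -⟩ := wSP_spec B (hB u (vneg u)) hp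
  exact ⟨Int.fdiv w 2, by rw [rho, hw]; rfl⟩

/-- the mirror trick : a `G`-path from `-u` to `z` bounds `rho (-z)` -/
lemma mirror_trick (hfin : φ.Finite) (hnnc : NoNegCycle (Gr φ))
    {u z : Vtx X} {ru : ℤ} (hu : rho φ u = (ru : WithTop ℤ))
    {p} (hp : IsPath (Gr φ) (vneg u) p z) :
    ∃ rz : ℤ, rho φ (vneg z) = (rz : WithTop ℤ) ∧ rz ≤ pweight p + ru := by
  obtain ⟨⟨q, hq, hwq⟩, hmin⟩ := rho_spec hfin hnnc hu
  -- path (vneg z) → z : mirror p ++ q ++ p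
  have hm : IsPath (Gr φ) (vneg z) (mirrorP p) u := by
    have := hp.mirror (Gr_mirror φ)
    rwa [vneg_vneg] at this
  have hpath : IsPath (Gr φ) (vneg z) ((mirrorP p ++ q) ++ p) z := (hm.append hq).append hp
  obtain ⟨rz, hrz⟩ := rho_finite_of_path hfin hnnc (by rwa [vneg_vneg])
  refine ⟨rz, hrz, ?_⟩
  have hlow := (rho_spec hfin hnnc hrz).2 _ (by rwa [vneg_vneg])
  have hww : pweight ((mirrorP p ++ q) ++ p) = pweight p + pweight q + pweight p := by
    simp only [pweight_append, pweight_mirrorP]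
  omega

/-- decompose a path in the tightened graph at its first tightening edge -/
lemma Gt_decomp {a z : Vtx X} {p} (hp : IsPath (Gt φ) a p z) :
    IsPath (Gr φ) a p z ∨
      ∃ (P₀ rest : List (Vtx X × Vtx X × ℤ)) (w : Vtx X) (r : ℤ), p = P₀ ++ (w, vneg w, 2*r) :: rest ∧
        IsPath (Gr φ) a P₀ w ∧ rho φ w = (r : WithTop ℤ) ∧
        IsPath (Gt φ) (vneg w) rest z := by
  induction hp with
  | nil => exact Or.inl (IsPath.nil _)
  | @cons u v w d q he hq ih =>
    rcases he with heG | ⟨u', r, hr, huw⟩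
    · rcases ih with hpure | ⟨P₀, rest, w', r, rfl, h1, h2, h3⟩
      · exact Or.inl (IsPath.cons heG hpure)
      · exact Or.inr ⟨(u, v, d) :: P₀, rest, w', r, rfl, IsPath.cons heG h1, h2, h3⟩
    · have h1 : u = u' := congrArg Prod.fst huw
      have h2 : v = vneg u' := congrArg (fun e => e.2.1) huw
      have h3 : d = 2*r := congrArg (fun e => e.2.2) huw
      subst h1; subst h2; subst h3
      exact Or.inr ⟨[], q, u, r, rfl, IsPath.nil u, hr, hq⟩

end Hard
/- ============ Part H : Lemma C, Claim E, Claim A ============ -/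

section Hard2
variable {X : Type*} {φ : Set (UC X)}

lemma lemC (hfin : φ.Finite) (hnnc : NoNegCycle (Gr φ))
    (H : ∀ (v : Vtx X) (r r' : ℤ), rho φ v = (r : WithTop ℤ) →
        rho φ (vneg v) = (r' : WithTop ℤ) → 0 ≤ r + r') :
    ∀ (n : ℕ) (p : List (Vtx X × Vtx X × ℤ)) (u z : Vtx X) (ru : ℤ), p.length ≤ n →
    rho φ u = (ru : WithTop ℤ) → IsPath (Gt φ) (vneg u) p z →
    ∃ rz : ℤ, rho φ (vneg z) = (rz : WithTop ℤ) ∧ rz ≤ pweight p + ru := by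
  intro n
  induction n with
  | zero =>
    intro p u z ru hl hu hp
    rw [List.length_eq_zero_iff.1 (Nat.le_zero.1 hl)] at hp ⊢
    cases hp
    exact ⟨ru, by rwa [vneg_vneg], by simp [pweight_nil]⟩
  | succ n ih =>
    intro p u z ru hl hu hp
    rcases Gt_decomp hp with hpure | ⟨P₀, rest, w, rw, rfl, hP₀, hrw, hrest⟩
    · exact mirror_trick hfin hnnc hu hpure
    · have hlen : rest.length ≤ n := by
        simp only [List.length_append, List.length_cons] at hl
        omega
      obtain ⟨rz, hrz, hle⟩ := ih rest w z rw hlen hrw hrest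
      obtain ⟨r', hr', hle'⟩ := mirror_trick hfin hnnc hu hP₀
      have hH := H w rw r' hrw hr'
      refine ⟨rz, hrz, ?_⟩
      have hpw : pweight (P₀ ++ (w, vneg w, 2*rw) :: rest) =
          pweight P₀ + 2*rw + pweight rest := by
        rw [pweight_append, pweight_cons]; ring
      omega

lemma claimE (hfin : φ.Finite) (hnnc : NoNegCycle (Gr φ))
    (H : ∀ (v : Vtx X) (r r' : ℤ), rho φ v = (r : WithTop ℤ) →
        rho φ (vneg v) = (r' : WithTop ℤ) → 0 ≤ r + r')
    {v : Vtx X} {p} (hp : IsPath (Gt φ) v p (vneg v)) :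
    ∃ rv : ℤ, rho φ v = (rv : WithTop ℤ) ∧ 2*rv ≤ pweight p := by
  rcases Gt_decomp hp with hpure | ⟨P₀, rest, w, rw, rfl, hP₀, hrw, hrest⟩
  · obtain ⟨rv, hrv⟩ := rho_finite_of_path hfin hnnc hpure
    exact ⟨rv, hrv, (rho_spec hfin hnnc hrv).2 p hpure⟩
  · obtain ⟨rz, hrz, hle⟩ := lemC hfin hnnc H rest.length rest w (vneg v) rw le_rfl hrw hrest
    rw [vneg_vneg] at hrz
    have hmir : IsPath (Gr φ) (vneg w) (mirrorP P₀) (vneg v) := hP₀.mirror (Gr_mirror φ)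
    obtain ⟨r', hr', hle'⟩ := mirror_trick hfin hnnc hrw hmir
    rw [vneg_vneg] at hr'
    have hrr : r' = rz := by
      rw [hrz] at hr'
      have : rz = r' := by exact_mod_cast hr'
      omega
    rw [hrr, pweight_mirrorP] at hle'
    refine ⟨rz, hrz, ?_⟩
    have hpw : pweight (P₀ ++ (w, vneg w, 2*rw) :: rest) =
        pweight P₀ + 2*rw + pweight rest := by
      rw [pweight_append, pweight_cons]; ring
    omega

lemma claimA (hfin : φ.Finite) (hnnc : NoNegCycle (Gr φ))
    (H : ∀ (v : Vtx X) (r r' : ℤ), rho φ v = (r : WithTop ℤ) →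
        rho φ (vneg v) = (r' : WithTop ℤ) → 0 ≤ r + r') :
    NoNegCycle (Gt φ) := by
  intro a p hp
  rcases Gt_decomp hp with hpure | ⟨P₀, rest, w, rw, rfl, hP₀, hrw, hrest⟩
  · exact hnnc a p hpure
  · have hcyc : IsPath (Gt φ) (vneg w) (rest ++ P₀) (vneg (vneg w)) := by
      rw [vneg_vneg]
      exact hrest.append (hP₀.mono Set.subset_union_left)
    obtain ⟨rv, hrv, hle⟩ := claimE hfin hnnc H hcyc
    have hH := H w rw rv hrw hrv
    have hpw : pweight (P₀ ++ (w, vneg w, 2*rw) :: rest) =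
        pweight P₀ + 2*rw + pweight rest := by
      rw [pweight_append, pweight_cons]; ring
    rw [pweight_append] at hle
    omega

end Hard2
/- ============ Part I : feasible potential, abstract 2-SAT ============ -/

section Delta
variable {X : Type*} {φ : Set (UC X)}

lemma delta_exists (hfin : φ.Finite) (hnnc : NoNegCycle (Gr φ))
    (hA : NoNegCycle (Gt φ)) :
    ∃ δ : Vtx X → ℤ, ∀ e ∈ Gt φ, δ e.2.1 ≤ δ e.1 + e.2.2 := by
  classical
  set FT : Finset (Vtx X × Vtx X × ℤ) :=
    (grNL_fin hfin).toFinset ∪ (tset_fin hfin).toFinset with hFT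
  have hlb : ∀ (u v : Vtx X) (p : List (Vtx X × Vtx X × ℤ)), IsPath (Gt φ) u p v →
      (∑ e ∈ FT, min e.2.2 0) ≤ pweight p := by
    intro u v p hp
    refine pweight_lb FT ?_ (gt_sl_nonneg hnnc) hA hp
    intro e he hnl
    rcases gt_nonloop e he hnl with h | h
    · exact Finset.mem_union_left _ ((grNL_fin hfin).mem_toFinset.2 h)
    · exact Finset.mem_union_right _ ((tset_fin hfin).mem_toFinset.2 h)
  have hS : ∀ v : Vtx X, ∃ lb : ℤ,
      (∃ u p, IsPath (Gt φ) u p v ∧ pweight p = lb) ∧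
        ∀ w : ℤ, (∃ u p, IsPath (Gt φ) u p v ∧ pweight p = w) → lb ≤ w := by
    intro v
    refine Int.exists_least_of_bdd ⟨∑ e ∈ FT, min e.2.2 0, ?_⟩ ⟨0, v, [], IsPath.nil v, rfl⟩
    rintro z ⟨u, p, hp, rfl⟩
    exact hlb u v p hp
  choose δ hmem hmin using hS
  refine ⟨δ, ?_⟩
  intro e he
  obtain ⟨u, p, hp, hw⟩ := hmem e.1
  have hp' : IsPath (Gt φ) u (p ++ [e]) e.2.1 := by
    refine hp.append ?_
    exact IsPath.cons (by rwa [show (e.1, e.2.1, e.2.2) = e from rfl]) (IsPath.nil _)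
  have := hmin e.2.1 (pweight (p ++ [e])) ⟨u, p ++ [e], hp', rfl⟩
  rw [pweight_append, pweight_cons, pweight_nil, hw] at this
  omega

end Delta

section TwoSat
variable {W : Type*}

lemma reach_skew {neg : W → W} (hneg : ∀ u, neg (neg u) = u)
    {I : W → W → Prop} (hskew : ∀ a b, I a b → I (neg b) (neg a))
    {a b : W} (h : Relation.ReflTransGen I a b) :
    Relation.ReflTransGen I (neg b) (neg a) := by
  induction h with
  | refl => exact Relation.ReflTransGen.refl
  | tail h' e ih => exact Relation.ReflTransGen.head (hskew _ _ e) ih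

lemma twoSAT (neg : W → W) (hneg : ∀ u, neg (neg u) = u)
    (I : W → W → Prop) (hskew : ∀ a b, I a b → I (neg b) (neg a))
    (hcons : ∀ u, ¬ (Relation.ReflTransGen I u (neg u) ∧ Relation.ReflTransGen I (neg u) u)) :
    ∃ P : Set W, (∀ u, u ∈ P → neg u ∉ P) ∧ (∀ u, u ∈ P ∨ neg u ∈ P) ∧
      (∀ a b, I a b → a ∈ P → b ∈ P) := by
  classical
  set S : Set (Set W) :=
    {P | (∀ u ∈ P, neg u ∉ P) ∧ (∀ a ∈ P, ∀ b, I a b → b ∈ P)} with hSdef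
  have hzorn : ∀ c ⊆ S, IsChain (· ⊆ ·) c → ∃ ub ∈ S, ∀ s ∈ c, s ⊆ ub := by
    intro c hc hchain
    refine ⟨⋃₀ c, ⟨?_, ?_⟩, fun s hs => Set.subset_sUnion_of_mem hs⟩
    · rintro u ⟨s, hs, hus⟩ ⟨t, ht, hut⟩
      rcases hchain.total hs ht with hst | hts
      · exact (hc ht).1 u (hst hus) hut
      · exact (hc hs).1 u hus (hts hut)
    · rintro a ⟨s, hs, has⟩ b hab
      exact ⟨s, hs, (hc hs).2 a has b hab⟩
  obtain ⟨M, hM⟩ := zorn_subset S hzorn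
  have hMS : M ∈ S := hM.1
  -- M is closed under reachability
  have hreach : ∀ a ∈ M, ∀ b, Relation.ReflTransGen I a b → b ∈ M := by
    intro a ha b hab
    induction hab with
    | refl => exact ha
    | tail h' e ih => exact hMS.2 _ ih _ e
  -- key extension step
  have key : ∀ u, u ∉ M → neg u ∉ M → ¬ Relation.ReflTransGen I u (neg u) → False := by
    intro u hu hnu hur
    set P' : Set W := M ∪ {w | Relation.ReflTransGen I u w} with hP'def
    have hP'S : P' ∈ S := by
      constructor
      · rintro w (hw | hw) hnw
        · rcases hnw with hnw | hnw
          · exact hMS.1 w hw hnw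
          · -- w ∈ M, reach u (neg w)
            have : Relation.ReflTransGen I w (neg u) := by
              have := reach_skew hneg hskew hnw
              rwa [hneg] at this
            exact hnu (hreach w hw _ this)
        · rcases hnw with hnw | hnw
          · have : Relation.ReflTransGen I (neg w) (neg u) := reach_skew hneg hskew hw
            exact hnu (hreach _ hnw _ this)
          · -- reach u w and reach u (neg w)
            have h1 : Relation.ReflTransGen I w (neg u) := by
              have := reach_skew hneg hskew hnw
              rwa [hneg] at this
            exact hur (hw.trans h1)
      · rintro a (ha | ha) b hab
        · exact Or.inl (hMS.2 a ha b hab)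
        · exact Or.inr (ha.tail hab)
    have hsub : M ⊆ P' := Set.subset_union_left
    have := hM.2 hP'S hsub
    exact hu (this (Or.inr Relation.ReflTransGen.refl))
  refine ⟨M, fun u hu => hMS.1 u hu, ?_, fun a b hab ha => hMS.2 a ha b hab⟩
  intro u
  by_contra hcon
  push_neg at hcon
  obtain ⟨hu, hnu⟩ := hcon
  by_cases hur : Relation.ReflTransGen I u (neg u)
  · have hnur : ¬ Relation.ReflTransGen I (neg u) (neg (neg u)) := by
      rw [hneg]
      intro hr
      exact hcons u ⟨hur, hr⟩
    exact key (neg u) hnu (by rwa [hneg]) hnur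
  · exact key u hu hnu hur

end TwoSat
/- ============ Part J : the implication relation on tight mirror-paired edges ============ -/

section Imp
variable {X : Type*} (φ : Set (UC X))

@[simp] lemma vneg_t (x : X) : vneg (true, x) = (false, x) := rfl
@[simp] lemma vneg_f (x : X) : vneg (false, x) = (true, x) := rfl

/-- implication `a → b` coming from a tight, mirror-tight edge from `b` to `a`
between vertices of odd potential difference -/
def Imp (δ : Vtx X → ℤ) (a b : Vtx X) : Prop :=
  Odd (δ a - δ (vneg a)) ∧ Odd (δ b - δ (vneg b)) ∧
    ∃ d : ℤ, (b, a, d) ∈ Gt φ ∧ δ a = δ b + d ∧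
      (vneg a, vneg b, d) ∈ Gt φ ∧ δ (vneg b) = δ (vneg a) + d

lemma odd_flip {m n : ℤ} (h : Odd (m - n)) : Odd (n - m) := by
  rw [Int.odd_iff] at *; omega

lemma Imp_skew (δ : Vtx X → ℤ) : ∀ a b, Imp φ δ a b → Imp φ δ (vneg b) (vneg a) := by
  rintro a b ⟨ha, hb, d, he1, ht1, he2, ht2⟩
  refine ⟨by rw [vneg_vneg]; exact odd_flip hb, by rw [vneg_vneg]; exact odd_flip ha, d, ?_, ?_, ?_, ?_⟩
  · exact he2
  · exact ht2
  · rw [vneg_vneg, vneg_vneg]; exact he1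
  · rw [vneg_vneg, vneg_vneg]; exact ht1

lemma Imp_chain_path {δ : Vtx X → ℤ} {a b : Vtx X}
    (h : Relation.ReflTransGen (Imp φ δ) a b) :
    a = b ∨ ∃ p, IsPath (Gt φ) b p a ∧ pweight p = δ a - δ b := by
  induction h with
  | refl => exact Or.inl rfl
  | @tail c b' h' e ih =>
    obtain ⟨-, -, d, he, ht, -, -⟩ := e
    rcases ih with rfl | ⟨p, hp, hw⟩
    · refine Or.inr ⟨[(b', a, d)], ?_, ?_⟩
      · exact IsPath.cons he (IsPath.nil _)
      · rw [pweight_cons, pweight_nil]; show d + 0 = _; omega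
    · refine Or.inr ⟨(b', c, d) :: p, IsPath.cons he hp, ?_⟩
      rw [pweight_cons]; show d + pweight p = _; omega

lemma Imp_cons (hfin : φ.Finite) (hnnc : NoNegCycle (Gr φ))
    (H : ∀ (v : Vtx X) (r r' : ℤ), rho φ v = (r : WithTop ℤ) →
        rho φ (vneg v) = (r' : WithTop ℤ) → 0 ≤ r + r')
    (δ : Vtx X → ℤ) :
    ∀ u, ¬ (Relation.ReflTransGen (Imp φ δ) u (vneg u) ∧
        Relation.ReflTransGen (Imp φ δ) (vneg u) u) := by
  rintro u ⟨h1, h2⟩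
  have hne : u ≠ vneg u := (vneg_ne u).symm
  rcases Imp_chain_path φ h1 with heq | ⟨p, hp, hw⟩
  · exact hne heq
  rcases Imp_chain_path φ h2 with heq | ⟨q, hq, hw'⟩
  · exact hne heq.symm
  -- p : vneg u → u with weight δ u - δ (vneg u); q : u → vneg u
  obtain ⟨ru, hru, hle⟩ := claimE hfin hnnc H hq
  have hp' : IsPath (Gt φ) (vneg u) p (vneg (vneg u)) := by rwa [vneg_vneg]
  obtain ⟨ru', hru', hle'⟩ := claimE hfin hnnc H hp'
  have hH := H u ru ru' hru hru'
  -- oddness of u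
  have hodd : Odd (δ u - δ (vneg u)) := by
    rcases (Relation.ReflTransGen.cases_head h1) with heq | ⟨c, hc, -⟩
    · exact absurd heq hne
    · exact hc.1
  rw [Int.odd_iff] at hodd
  omega

end Imp
/- ============ Part K : the integral model and its verification ============ -/

section Model
variable {X : Type*} {φ : Set (UC X)}

open Classical in
/-- the candidate integral model -/
noncomputable def mof (δ : Vtx X → ℤ) (P : Set (Vtx X)) (x : X) : ℤ :=
  Int.fdiv (δ (true, x) - δ (false, x) + (if (true, x) ∈ P then 1 else 0)) 2

lemma mof_in {δ : Vtx X → ℤ} {P : Set (Vtx X)} {x : X} (h : (true, x) ∈ P) :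
    mof δ P x = (δ (true, x) - δ (false, x) + 1) / 2 := by
  rw [mof, if_pos h, Int.fdiv_eq_ediv_of_nonneg _ (by norm_num)]

lemma mof_out {δ : Vtx X → ℤ} {P : Set (Vtx X)} {x : X} (h : (true, x) ∉ P) :
    mof δ P x = (δ (true, x) - δ (false, x)) / 2 := by
  rw [mof, if_neg h, Int.fdiv_eq_ediv_of_nonneg _ (by norm_num), add_zero]

variable (δ : Vtx X → ℤ) (P : Set (Vtx X))
variable (hδ : ∀ e ∈ Gt φ, δ e.2.1 ≤ δ e.1 + e.2.2)
variable (hP1 : ∀ u, u ∈ P → vneg u ∉ P)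
variable (hP2 : ∀ u : Vtx X, u ∈ P ∨ vneg u ∈ P)
variable (hP3 : ∀ a b, Imp φ δ a b → a ∈ P → b ∈ P)

include hδ hP1 hP3 in
lemma ver1 {x y : X} {d : ℤ}
    (he1 : ((true, y), (true, x), d) ∈ Gr φ)
    (he2 : ((false, x), (false, y), d) ∈ Gr φ) :
    mof δ P x - mof δ P y ≤ d := by
  have hf1 : δ (true, x) ≤ δ (true, y) + d := hδ _ (Or.inl he1)
  have hf2 : δ (false, y) ≤ δ (false, x) + d := hδ _ (Or.inl he2)
  by_contra hg
  by_cases hpx : (true, x) ∈ P <;> by_cases hpy : (true, y) ∈ P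
  · rw [mof_in hpx, mof_in hpy] at hg; omega
  · rw [mof_in hpx, mof_out hpy] at hg
    have ht1 : δ (true, x) = δ (true, y) + d := by omega
    have ht2 : δ (false, y) = δ (false, x) + d := by omega
    have hox : Odd (δ (true, x) - δ (false, x)) := by rw [Int.odd_iff]; omega
    have hoy : Odd (δ (true, y) - δ (false, y)) := by rw [Int.odd_iff]; omega
    have himp : Imp φ δ (true, x) (true, y) :=
      ⟨hox, hoy, d, Or.inl he1, ht1, Or.inl he2, ht2⟩
    exact hpy (hP3 _ _ himp hpx)
  · rw [mof_out hpx, mof_in hpy] at hg; omega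
  · rw [mof_out hpx, mof_out hpy] at hg; omega

include hδ hP1 hP3 in
lemma ver2 {x y : X} {d : ℤ}
    (he1 : ((false, y), (true, x), d) ∈ Gr φ)
    (he2 : ((false, x), (true, y), d) ∈ Gr φ) :
    mof δ P x + mof δ P y ≤ d := by
  have hf1 : δ (true, x) ≤ δ (false, y) + d := hδ _ (Or.inl he1)
  have hf2 : δ (true, y) ≤ δ (false, x) + d := hδ _ (Or.inl he2)
  by_contra hg
  by_cases hpx : (true, x) ∈ P <;> by_cases hpy : (true, y) ∈ P
  · rw [mof_in hpx, mof_in hpy] at hg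
    have ht1 : δ (true, x) = δ (false, y) + d := by omega
    have ht2 : δ (true, y) = δ (false, x) + d := by omega
    have hox : Odd (δ (true, x) - δ (false, x)) := by rw [Int.odd_iff]; omega
    have hoy : Odd (δ (false, y) - δ (true, y)) := by rw [Int.odd_iff]; omega
    have himp : Imp φ δ (true, x) (false, y) :=
      ⟨hox, hoy, d, Or.inl he1, ht1, Or.inl he2, ht2⟩
    exact hP1 _ hpy (hP3 _ _ himp hpx)
  · rw [mof_in hpx, mof_out hpy] at hg; omega
  · rw [mof_out hpx, mof_in hpy] at hg; omega
  · rw [mof_out hpx, mof_out hpy] at hg; omega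

include hδ hP2 hP3 in
lemma ver3 {x y : X} {d : ℤ}
    (he1 : ((true, y), (false, x), d) ∈ Gr φ)
    (he2 : ((true, x), (false, y), d) ∈ Gr φ) :
    - mof δ P x - mof δ P y ≤ d := by
  have hf1 : δ (false, x) ≤ δ (true, y) + d := hδ _ (Or.inl he1)
  have hf2 : δ (false, y) ≤ δ (true, x) + d := hδ _ (Or.inl he2)
  by_contra hg
  by_cases hpx : (true, x) ∈ P <;> by_cases hpy : (true, y) ∈ P
  · rw [mof_in hpx, mof_in hpy] at hg; omega
  · rw [mof_in hpx, mof_out hpy] at hg; omega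
  · rw [mof_out hpx, mof_in hpy] at hg; omega
  · rw [mof_out hpx, mof_out hpy] at hg
    have hpx' : (false, x) ∈ P := by
      rcases hP2 (true, x) with h | h
      · exact absurd h hpx
      · exact h
    have ht1 : δ (false, x) = δ (true, y) + d := by omega
    have ht2 : δ (false, y) = δ (true, x) + d := by omega
    have hox : Odd (δ (false, x) - δ (true, x)) := by rw [Int.odd_iff]; omega
    have hoy : Odd (δ (true, y) - δ (false, y)) := by rw [Int.odd_iff]; omega
    have himp : Imp φ δ (false, x) (true, y) :=
      ⟨hox, hoy, d, Or.inl he1, ht1, Or.inl he2, ht2⟩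
    exact hpy (hP3 _ _ himp hpx')

include hδ in
lemma ver4 {x : X} {d : ℤ}
    (he : ((false, x), (true, x), 2*d) ∈ Gr φ) :
    mof δ P x ≤ d := by
  have hf : δ (true, x) ≤ δ (false, x) + 2*d := hδ _ (Or.inl he)
  by_cases hpx : (true, x) ∈ P
  · rw [mof_in hpx]; omega
  · rw [mof_out hpx]; omega

include hδ in
lemma ver5 {x : X} {d : ℤ}
    (he : ((true, x), (false, x), 2*d) ∈ Gr φ) :
    - mof δ P x ≤ d := by
  have hf : δ (false, x) ≤ δ (true, x) + 2*d := hδ _ (Or.inl he)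
  by_cases hpx : (true, x) ∈ P
  · rw [mof_in hpx]; omega
  · rw [mof_out hpx]; omega

end Model
/- ============ Part L : existence of an integral model ============ -/

section Final
variable {X : Type*} {φ : Set (UC X)}

lemma satZ_of_rho_nonneg (hwf : ∀ c ∈ φ, c.IsUTVPI) (hfin : φ.Finite)
    (hnnc : NoNegCycle (Gr φ))
    (H : ∀ (v : Vtx X) (r r' : ℤ), rho φ v = (r : WithTop ℤ) →
        rho φ (vneg v) = (r' : WithTop ℤ) → 0 ≤ r + r') :
    SatZ φ := by
  have hA : NoNegCycle (Gt φ) := claimA hfin hnnc H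
  obtain ⟨δ, hδ⟩ := delta_exists hfin hnnc hA
  obtain ⟨P, hP1, hP2, hP3⟩ :=
    twoSAT vneg vneg_vneg (Imp φ δ) (Imp_skew φ δ) (Imp_cons φ hfin hnnc H δ)
  refine ⟨mof δ P, ?_⟩
  intro c hcφ
  obtain ⟨a, b, x, y, ha, hb, hf⟩ := hwf c hcφ
  have hsum : (c.f.sum fun z w => w * mof δ P z) = a * mof δ P x + b * mof δ P y := by
    rw [hf, eval_add, eval_single, eval_single]
  rw [UC.holds, hsum]
  have hc0 : c = ⟨c.f, c.bound⟩ := rfl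
  rcases ha with rfl | rfl | rfl <;> rcases hb with rfl | rfl | rfl
  · -- a = -1, b = -1
    have hceq : c = ⟨-Finsupp.single x 1 - Finsupp.single y 1, c.bound⟩ := by
      rw [hc0]
      congr 1
      rw [hf, Finsupp.single_neg, Finsupp.single_neg]; abel
    have he1 : ((true, y), (false, x), c.bound) ∈ Gr φ :=
      ⟨c, hcφ, x, y, c.bound, Or.inr <| Or.inr <| Or.inl ⟨hceq, Or.inl rfl⟩⟩
    have he2 : ((true, x), (false, y), c.bound) ∈ Gr φ :=
      ⟨c, hcφ, x, y, c.bound, Or.inr <| Or.inr <| Or.inl ⟨hceq, Or.inr rfl⟩⟩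
    have := ver3 δ P hδ hP2 hP3 he1 he2
    omega
  · -- a = -1, b = 0
    have hceq : c = ⟨-Finsupp.single x 1, c.bound⟩ := by
      rw [hc0]
      congr 1
      rw [hf, Finsupp.single_neg, Finsupp.single_zero, add_zero]
    have he : ((true, x), (false, x), 2*c.bound) ∈ Gr φ :=
      ⟨c, hcφ, x, x, c.bound, Or.inr <| Or.inr <| Or.inr <| Or.inr ⟨hceq, rfl⟩⟩
    have := ver5 δ P hδ he
    omega
  · -- a = -1, b = 1
    have hceq : c = ⟨Finsupp.single y 1 - Finsupp.single x 1, c.bound⟩ := by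
      rw [hc0]
      congr 1
      rw [hf, Finsupp.single_neg]; abel
    have he1 : ((true, x), (true, y), c.bound) ∈ Gr φ :=
      ⟨c, hcφ, y, x, c.bound, Or.inl ⟨hceq, Or.inl rfl⟩⟩
    have he2 : ((false, y), (false, x), c.bound) ∈ Gr φ :=
      ⟨c, hcφ, y, x, c.bound, Or.inl ⟨hceq, Or.inr rfl⟩⟩
    have := ver1 δ P hδ hP1 hP3 he1 he2
    omega
  · -- a = 0, b = -1
    have hceq : c = ⟨-Finsupp.single y 1, c.bound⟩ := by
      rw [hc0]
      congr 1
      rw [hf, Finsupp.single_neg, Finsupp.single_zero, zero_add]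
    have he : ((true, y), (false, y), 2*c.bound) ∈ Gr φ :=
      ⟨c, hcφ, y, y, c.bound, Or.inr <| Or.inr <| Or.inr <| Or.inr ⟨hceq, rfl⟩⟩
    have := ver5 δ P hδ he
    omega
  · -- a = 0, b = 0
    have hf0 : c.f = 0 := by rw [hf, Finsupp.single_zero, Finsupp.single_zero, add_zero]
    have hceq : c = ⟨Finsupp.single x 1 - Finsupp.single x 1, c.bound⟩ := by
      rw [hc0]
      congr 1
      rw [hf0, sub_self]
    have he : ((true, x), (true, x), c.bound) ∈ Gr φ :=
      ⟨c, hcφ, x, x, c.bound, Or.inl ⟨hceq, Or.inl rfl⟩⟩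
    have := sl_nonneg hnnc _ he rfl
    simp only at this
    omega
  · -- a = 0, b = 1
    have hceq : c = ⟨Finsupp.single y 1, c.bound⟩ := by
      rw [hc0]
      congr 1
      rw [hf, Finsupp.single_zero, zero_add]
    have he : ((false, y), (true, y), 2*c.bound) ∈ Gr φ :=
      ⟨c, hcφ, y, y, c.bound, Or.inr <| Or.inr <| Or.inr <| Or.inl ⟨hceq, rfl⟩⟩
    have := ver4 δ P hδ he
    omega
  · -- a = 1, b = -1
    have hceq : c = ⟨Finsupp.single x 1 - Finsupp.single y 1, c.bound⟩ := by
      rw [hc0]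
      congr 1
      rw [hf, Finsupp.single_neg]; abel
    have he1 : ((true, y), (true, x), c.bound) ∈ Gr φ :=
      ⟨c, hcφ, x, y, c.bound, Or.inl ⟨hceq, Or.inl rfl⟩⟩
    have he2 : ((false, x), (false, y), c.bound) ∈ Gr φ :=
      ⟨c, hcφ, x, y, c.bound, Or.inl ⟨hceq, Or.inr rfl⟩⟩
    have := ver1 δ P hδ hP1 hP3 he1 he2
    omega
  · -- a = 1, b = 0
    have hceq : c = ⟨Finsupp.single x 1, c.bound⟩ := by
      rw [hc0]
      congr 1
      rw [hf, Finsupp.single_zero, add_zero]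
    have he : ((false, x), (true, x), 2*c.bound) ∈ Gr φ :=
      ⟨c, hcφ, x, x, c.bound, Or.inr <| Or.inr <| Or.inr <| Or.inl ⟨hceq, rfl⟩⟩
    have := ver4 δ P hδ he
    omega
  · -- a = 1, b = 1
    have hceq : c = ⟨Finsupp.single x 1 + Finsupp.single y 1, c.bound⟩ := by
      rw [← hf]
    have he1 : ((false, y), (true, x), c.bound) ∈ Gr φ :=
      ⟨c, hcφ, x, y, c.bound, Or.inr <| Or.inl ⟨hceq, Or.inl rfl⟩⟩
    have he2 : ((false, x), (true, y), c.bound) ∈ Gr φ :=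
      ⟨c, hcφ, x, y, c.bound, Or.inr <| Or.inl ⟨hceq, Or.inr rfl⟩⟩
    have := ver2 δ P hδ hP1 hP3 he1 he2
    omega

end Final

/-- If the constraint graph `G_φ` of a (finite) set `φ` of UTVPI
constraints has no negative weight cycle, then `φ` is unsatisfiable in ℤ iff there
is a vertex `v` with `ρ(v) + ρ(-v) < 0` (in `ℤ ∪ {+∞}`). -/
theorem unsatZ_iff_exists_rho_neg {X : Type*}
    (φ : Set (UC X)) (hwf : ∀ c ∈ φ, c.IsUTVPI) (hfin : φ.Finite)
    (hnnc : NoNegCycle (Gr φ)) :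
    ¬ SatZ φ ↔ ∃ v : Vtx X, rho φ v + rho φ (vneg v) < (0 : WithTop ℤ) := by
  constructor
  · intro hunsat
    by_contra hno
    push_neg at hno
    have H : ∀ (v : Vtx X) (r r' : ℤ), rho φ v = (r : WithTop ℤ) →
        rho φ (vneg v) = (r' : WithTop ℤ) → 0 ≤ r + r' := by
      intro v r r' h1 h2
      have h3 := hno v
      rw [h1, h2] at h3
      exact_mod_cast h3
    exact hunsat (satZ_of_rho_nonneg hwf hfin hnnc H)
  · exact unsatZ_of_rho_neg

end UTVPIPaper
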